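/- arXiv:1107.4530 — 2 statements merged into one kernel-verified Lean document; each statement's English description precedes it below -/
import Mathlib

section
/- Over a field K of characteristic not equal to 3, the projective plane cubic curve defined by a x²y + b x y² + d z³ = 0 with a, b, d all nonzero is smooth. -/
/-- Over a field `K` of characteristic not equal to 3, the projective plane cubic curve
`a x²y + b x y² + d z³ = 0` with `a, b, d` all nonzero is smooth: there is no point of
`P²(K̄)` at which `F = a x²y + b x y² + d z³` and all three partial derivatives
`∂F/∂x = 2axy + by²`, `∂F/∂y = ax² + 2bxy`, `∂F/∂z = 3dz²` vanish simultaneously. -/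
theorem stmt_10 (K : Type) [Field K] (h3 : (3 : K) ≠ 0)
    (a b d : K) (ha : a ≠ 0) (hb : b ≠ 0) (hd : d ≠ 0) :
    ∀ x y z : AlgebraicClosure K, ¬(x = 0 ∧ y = 0 ∧ z = 0) →
      let A := algebraMap K (AlgebraicClosure K) a
      let B := algebraMap K (AlgebraicClosure K) b
      let D := algebraMap K (AlgebraicClosure K) d
      ¬(A * x ^ 2 * y + B * x * y ^ 2 + D * z ^ 3 = 0 ∧
        2 * A * x * y + B * y ^ 2 = 0 ∧
        A * x ^ 2 + 2 * B * x * y = 0 ∧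
        3 * D * z ^ 2 = 0) := by
  intro x y z hne A B D
  rintro ⟨hF, hX, hY, hZ⟩
  have hinj := (algebraMap K (AlgebraicClosure K)).injective
  have hA : A ≠ 0 := fun h => ha (hinj (by rw [map_zero]; exact h))
  have hB : B ≠ 0 := fun h => hb (hinj (by rw [map_zero]; exact h))
  have hD : D ≠ 0 := fun h => hd (hinj (by rw [map_zero]; exact h))
  have h3' : (3 : AlgebraicClosure K) ≠ 0 := fun h => h3 (hinj (by rw [map_zero, map_ofNat]; exact h))
  -- from 3 D z² = 0 conclude z = 0
  have hz : z = 0 := by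
    rcases mul_eq_zero.mp hZ with h | h
    · rcases mul_eq_zero.mp h with h | h
      · exact absurd h h3'
      · exact absurd h hD
    · exact pow_eq_zero_iff (n := 2) (by norm_num) |>.mp h
  subst hz
  have hF' : A * x ^ 2 * y + B * x * y ^ 2 = 0 := by
    simpa using hF
  by_cases hx : x = 0
  · subst hx
    have hy : y = 0 := by
      have : B * y ^ 2 = 0 := by simpa using hX
      rcases mul_eq_zero.mp this with h | h
      · exact absurd h hB
      · exact pow_eq_zero_iff (n := 2) (by norm_num) |>.mp h
    exact hne ⟨rfl, hy, rfl⟩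
  · by_cases hy : y = 0
    · subst hy
      have : A * x ^ 2 = 0 := by simpa using hY
      rcases mul_eq_zero.mp this with h | h
      · exact absurd h hA
      · exact hx (pow_eq_zero_iff (n := 2) (by norm_num) |>.mp h)
    · -- x ≠ 0, y ≠ 0
      have e1 : A * x + B * y = 0 := by
        have : x * y * (A * x + B * y) = 0 := by ring_nf; ring_nf at hF'; linear_combination hF'
        rcases mul_eq_zero.mp this with h | h
        · rcases mul_eq_zero.mp h with h | h
          exacts [absurd h hx, absurd h hy]
        · exact h
      have e2 : 2 * (A * x) + B * y = 0 := by
        have : y * (2 * (A * x) + B * y) = 0 := by linear_combination hX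
        rcases mul_eq_zero.mp this with h | h
        · exact absurd h hy
        · exact h
      have hAx : A * x = 0 := by linear_combination e2 - e1
      rcases mul_eq_zero.mp hAx with h | h
      exacts [absurd h hA, absurd h hx]
end

section
/- Over a field K of characteristic not 3, the projective cubic curve a x²y + b x y² + c x y z + d z³ = 0 with a, b, d nonzero is singular if and only if c³ = -27 a b d; in that case the point (x : y : z) = (-c/(3a) : -c/(3b) : 1) is a singular point (taking d = 1 after normalization). -/
lemma aux_pt (K : Type) [Field K] (h3 : (3 : K) ≠ 0)
    (a b c : K) (ha : a ≠ 0) (hb : b ≠ 0) (hc : c ^ 3 = -27 * a * b) :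
    a * (-c / (3 * a)) ^ 2 * (-c / (3 * b)) + b * (-c / (3 * a)) * (-c / (3 * b)) ^ 2 +
        c * (-c / (3 * a)) * (-c / (3 * b)) * 1 + 1 ^ 3 = 0 ∧
    2 * a * (-c / (3 * a)) * (-c / (3 * b)) + b * (-c / (3 * b)) ^ 2 + c * (-c / (3 * b)) * 1 = 0 ∧
    a * (-c / (3 * a)) ^ 2 + 2 * b * (-c / (3 * a)) * (-c / (3 * b)) + c * (-c / (3 * a)) * 1 = 0 ∧
    c * (-c / (3 * a)) * (-c / (3 * b)) + 3 * 1 ^ 2 = 0 := by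
  have e2 : 2 * a * (-c / (3 * a)) * (-c / (3 * b)) + b * (-c / (3 * b)) ^ 2 +
      c * (-c / (3 * b)) * 1 = 0 := by
    field_simp
    ring
  have e3 : a * (-c / (3 * a)) ^ 2 + 2 * b * (-c / (3 * a)) * (-c / (3 * b)) +
      c * (-c / (3 * a)) * 1 = 0 := by
    field_simp
    ring
  have e4 : c * (-c / (3 * a)) * (-c / (3 * b)) + 3 * 1 ^ 2 = 0 := by
    field_simp
    linear_combination hc
  refine ⟨?_, e2, e3, e4⟩
  have h : 3 * (a * (-c / (3 * a)) ^ 2 * (-c / (3 * b)) + b * (-c / (3 * a)) * (-c / (3 * b)) ^ 2 +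
      c * (-c / (3 * a)) * (-c / (3 * b)) * 1 + 1 ^ 3) =
      (-c / (3 * a)) * (2 * a * (-c / (3 * a)) * (-c / (3 * b)) + b * (-c / (3 * b)) ^ 2 +
        c * (-c / (3 * b)) * 1) +
      (-c / (3 * b)) * (a * (-c / (3 * a)) ^ 2 + 2 * b * (-c / (3 * a)) * (-c / (3 * b)) +
        c * (-c / (3 * a)) * 1) +
      1 * (c * (-c / (3 * a)) * (-c / (3 * b)) + 3 * 1 ^ 2) := by ring
  rw [e2, e3, e4] at h
  simp at h
  rcases h with h' | h'
  · exact absurd h' h3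
  · linear_combination h'

/-- Over a field `K` with `char K ≠ 3`, the projective cubic curve
`F = a x²y + b x y² + c x y z + z³ = 0` (normalized with `d = 1`, `a, b ≠ 0`) is
singular — i.e. `F` and its three partial derivatives vanish simultaneously at some
point of `P²(K̄)` — if and only if `c³ = -27 a b`; and in that case the point
`(x : y : z) = (-c/(3a) : -c/(3b) : 1)` is a singular point. -/
theorem stmt_11 (K : Type) [Field K] (h3 : (3 : K) ≠ 0)
    (a b c : K) (ha : a ≠ 0) (hb : b ≠ 0) :
    ((∃ x y z : AlgebraicClosure K, ¬(x = 0 ∧ y = 0 ∧ z = 0) ∧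
        (letI A := algebraMap K (AlgebraicClosure K) a
         letI B := algebraMap K (AlgebraicClosure K) b
         letI Cc := algebraMap K (AlgebraicClosure K) c
         A * x ^ 2 * y + B * x * y ^ 2 + Cc * x * y * z + z ^ 3 = 0 ∧
         2 * A * x * y + B * y ^ 2 + Cc * y * z = 0 ∧
         A * x ^ 2 + 2 * B * x * y + Cc * x * z = 0 ∧
         Cc * x * y + 3 * z ^ 2 = 0)) ↔
      c ^ 3 = -27 * a * b) ∧
    (c ^ 3 = -27 * a * b →
      letI x := -c / (3 * a)
      letI y := -c / (3 * b)
      letI z := (1 : K)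
      a * x ^ 2 * y + b * x * y ^ 2 + c * x * y * z + z ^ 3 = 0 ∧
      2 * a * x * y + b * y ^ 2 + c * y * z = 0 ∧
      a * x ^ 2 + 2 * b * x * y + c * x * z = 0 ∧
      c * x * y + 3 * z ^ 2 = 0) := by
  set L := AlgebraicClosure K
  set φ := algebraMap K L with hφ
  have hinj : Function.Injective φ := (algebraMap K L).injective
  have hA : φ a ≠ 0 := fun h => ha (hinj (by simpa using h))
  have hB : φ b ≠ 0 := fun h => hb (hinj (by simpa using h))
  have h3L : (3 : L) ≠ 0 := by
    intro h
    apply h3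
    apply hinj
    rw [map_zero, map_ofNat]
    exact h
  constructor
  · constructor
    · rintro ⟨x, y, z, hnz, hF, hFx, hFy, hFz⟩
      -- first show z ≠ 0
      have hz : z ≠ 0 := by
        intro hz0
        subst hz0
        simp only [mul_zero, zero_pow, add_zero, pow_succ, pow_zero, one_mul] at hFx hFy hFz
        -- hFz : φ c * x * y = 0 etc (after simp forms may vary); redo by hand
        have hfz : φ c * x * y = 0 := by linear_combination hFz
        have hfx : 2 * φ a * x * y + φ b * y ^ 2 = 0 := by linear_combination hFx
        have hfy : φ a * x ^ 2 + 2 * φ b * x * y = 0 := by linear_combination hFy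
        have hx : x ≠ 0 := by
          intro hx0
          subst hx0
          have hy : y = 0 := by
            have := mul_eq_zero.mp (by linear_combination hfx : φ b * (y * y) = 0)
            rcases this with h | h
            · exact absurd h hB
            · rcases mul_eq_zero.mp h with h | h <;> exact h
          exact hnz ⟨rfl, hy, rfl⟩
        have hy : y ≠ 0 := by
          intro hy0
          subst hy0
          have hx0 : x = 0 := by
            have := mul_eq_zero.mp (by linear_combination hfy : φ a * (x * x) = 0)
            rcases this with h | h
            · exact absurd h hA
            · rcases mul_eq_zero.mp h with h | h <;> exact h
          exact hx hx0
        -- from hfx, hfy derive 3 * φ b * y * x = 0 → contradiction? use combination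
        -- 2*hfy - hfx : 2a x² + 4b x y - 2a x y - b y² ... not directly. Use:
        -- y*hfy - .. . Instead: x*hfx : 2a x² y + b x y² = 0 ; y*hfy : a x² y + 2 b x y² = 0
        have h1 : 2 * φ a * (x * x * y) + φ b * (x * y * y) = 0 := by
          linear_combination x * hfx
        have h2 : φ a * (x * x * y) + 2 * φ b * (x * y * y) = 0 := by
          linear_combination y * hfy
        have h4 : 3 * (φ b * (x * y * y)) = 0 := by linear_combination 2 * h2 - h1
        rcases mul_eq_zero.mp h4 with h | h
        · exact h3L h
        · rcases mul_eq_zero.mp h with h | h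
          · exact hB h
          · rcases mul_eq_zero.mp h with h | h
            · rcases mul_eq_zero.mp h with h | h
              · exact hx h
              · exact hy h
            · exact hy h
      -- now z ≠ 0
      have hx : x ≠ 0 := by
        intro hx0
        apply hz
        have : 3 * z ^ 2 = 0 := by rw [hx0] at hFz; linear_combination hFz
        rcases mul_eq_zero.mp this with h | h
        · exact absurd h h3L
        · exact pow_eq_zero_iff (by norm_num) |>.mp h
      have hy : y ≠ 0 := by
        intro hy0
        apply hz
        have : 3 * z ^ 2 = 0 := by rw [hy0] at hFz; linear_combination hFz
        rcases mul_eq_zero.mp this with h | h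
        · exact absurd h h3L
        · exact pow_eq_zero_iff (by norm_num) |>.mp h
      have h1 : 2 * φ a * x + φ b * y + φ c * z = 0 := by
        have : y * (2 * φ a * x + φ b * y + φ c * z) = 0 := by linear_combination hFx
        rcases mul_eq_zero.mp this with h | h
        · exact absurd h hy
        · exact h
      have h2 : φ a * x + 2 * φ b * y + φ c * z = 0 := by
        have : x * (φ a * x + 2 * φ b * y + φ c * z) = 0 := by linear_combination hFy
        rcases mul_eq_zero.mp this with h | h
        · exact absurd h hx
        · exact h
      have hu : 3 * (φ a) * x + φ c * z = 0 := by linear_combination 2 * h1 - h2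
      have hv : 3 * (φ b) * y + φ c * z = 0 := by linear_combination 2 * h2 - h1
      have key : z ^ 2 * ((φ c) ^ 3 + 27 * φ a * φ b) = 0 := by
        linear_combination 9 * φ a * φ b * hFz + ((φ c) ^ 2 * z - φ c * (3 * φ b * y + φ c * z)) * hu
          + (φ c) ^ 2 * z * hv
      have hcl : (φ c) ^ 3 = -27 * φ a * φ b := by
        rcases mul_eq_zero.mp key with h | h
        · exact absurd (pow_eq_zero_iff (by norm_num) |>.mp h) hz
        · linear_combination h
      apply hinj
      rw [map_pow, hcl, map_mul, map_mul, map_neg, map_ofNat]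
    · intro hc
      obtain ⟨f1, f2, f3, f4⟩ := aux_pt K h3 a b c ha hb hc
      refine ⟨φ (-c / (3 * a)), φ (-c / (3 * b)), φ 1, ?_, ?_, ?_, ?_, ?_⟩
      · rintro ⟨-, -, h⟩
        simp at h
      · have := congrArg φ f1
        simpa only [map_add, map_mul, map_pow, map_zero, map_one, map_ofNat] using this
      · have := congrArg φ f2
        simpa only [map_add, map_mul, map_pow, map_zero, map_one, map_ofNat] using this
      · have := congrArg φ f3
        simpa only [map_add, map_mul, map_pow, map_zero, map_one, map_ofNat] using this
      · have := congrArg φ f4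
        simpa only [map_add, map_mul, map_pow, map_zero, map_one, map_ofNat] using this
  · intro hc
    exact aux_pt K h3 a b c ha hb hc
end
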